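/- The unitary U_n satisfies (⟨0|⊗⟨0|⊗⟨0|⊗I_N) U_n (|0⟩⊗|0⟩⊗|0⟩⊗e_{N−1}) = (1/4)(e_{N−2} − e_{N−1}). -/

import Mathlib

open Matrix
open scoped Kronecker

noncomputable section

instance instNeZeroPow2 (n : ℕ) : NeZero (2 ^ n) := ⟨pow_ne_zero n two_ne_zero⟩

/-- Cyclic left shift: `Sm • e_j = e_{j-1 mod N}`, i.e. `(Sm)_{i j} = [i = j - 1]`. -/
def Sm (N : ℕ) [NeZero N] : Matrix (Fin N) (Fin N) ℂ :=
  Matrix.of fun i j => if i = j - 1 then 1 else 0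

/-- Cyclic right shift: `Sp • e_j = e_{j+1 mod N}`. -/
def Sp (N : ℕ) [NeZero N] : Matrix (Fin N) (Fin N) ℂ :=
  Matrix.of fun i j => if i = j + 1 then 1 else 0

/-- The index `N - 1` of the last grid point. -/
def fLast (N : ℕ) [NeZero N] : Fin N := ⟨N - 1, Nat.sub_lt (Nat.pos_of_neZero N) Nat.one_pos⟩

def Hgate : Matrix (Fin 2) (Fin 2) ℂ := ((1 / Real.sqrt 2 : ℝ) : ℂ) • !![1, 1; 1, -1]
def Zgate : Matrix (Fin 2) (Fin 2) ℂ := !![1, 0; 0, -1]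
def Xgate : Matrix (Fin 2) (Fin 2) ℂ := !![0, 1; 1, 0]
def P0 : Matrix (Fin 2) (Fin 2) ℂ := !![1, 0; 0, 0]
def P1 : Matrix (Fin 2) (Fin 2) ℂ := !![0, 0; 0, 1]

/-- Controlled flip `F(Q) = X ⊗ Q + I₂ ⊗ (I − Q)` for a projector `Q`. -/
def Fctrl {α : Type*} [DecidableEq α] [Fintype α] (Q : Matrix α α ℂ) :
    Matrix (Fin 2 × α) (Fin 2 × α) ℂ :=
  Xgate ⊗ₖ Q + (1 : Matrix (Fin 2) (Fin 2) ℂ) ⊗ₖ ((1 : Matrix α α ℂ) - Q)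

/-- `C₋ = I₂ ⊗ (|0⟩⟨0| ⊗ I₂ ⊗ S⁻ + |1⟩⟨1| ⊗ I₂ ⊗ I_N)` on `del, ℓ₁, ℓ₀, j`. -/
def Cminus3 (N : ℕ) [NeZero N] :
    Matrix (Fin 2 × Fin 2 × Fin 2 × Fin N) (Fin 2 × Fin 2 × Fin 2 × Fin N) ℂ :=
  (1 : Matrix (Fin 2) (Fin 2) ℂ) ⊗ₖ
    (P0 ⊗ₖ ((1 : Matrix (Fin 2) (Fin 2) ℂ) ⊗ₖ Sm N) +
     P1 ⊗ₖ ((1 : Matrix (Fin 2) (Fin 2) ℂ) ⊗ₖ (1 : Matrix (Fin N) (Fin N) ℂ)))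

/-- `C₊ = I₂ ⊗ I₂ ⊗ (|1⟩⟨1| ⊗ S⁺ + |0⟩⟨0| ⊗ I_N)` on `del, ℓ₁, ℓ₀, j`. -/
def Cplus3 (N : ℕ) [NeZero N] :
    Matrix (Fin 2 × Fin 2 × Fin 2 × Fin N) (Fin 2 × Fin 2 × Fin 2 × Fin N) ℂ :=
  (1 : Matrix (Fin 2) (Fin 2) ℂ) ⊗ₖ ((1 : Matrix (Fin 2) (Fin 2) ℂ) ⊗ₖ
    (P1 ⊗ₖ Sp N + P0 ⊗ₖ (1 : Matrix (Fin N) (Fin N) ℂ)))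

/-- `B₀ = F(|0⟩⟨0| ⊗ |0⟩⟨0| ⊗ e₀e₀ᵀ)`. -/
def B00 (N : ℕ) [NeZero N] :
    Matrix (Fin 2 × Fin 2 × Fin 2 × Fin N) (Fin 2 × Fin 2 × Fin 2 × Fin N) ℂ :=
  Fctrl (P0 ⊗ₖ (P0 ⊗ₖ Matrix.single (0 : Fin N) (0 : Fin N) (1 : ℂ)))

/-- `B₂ = F(|0⟩⟨0| ⊗ |1⟩⟨1| ⊗ e₀e₀ᵀ)`. -/
def B01 (N : ℕ) [NeZero N] :
    Matrix (Fin 2 × Fin 2 × Fin 2 × Fin N) (Fin 2 × Fin 2 × Fin 2 × Fin N) ℂ :=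
  Fctrl (P0 ⊗ₖ (P1 ⊗ₖ Matrix.single (0 : Fin N) (0 : Fin N) (1 : ℂ)))

/-- `B_{N−1} = F(|1⟩⟨1| ⊗ |1⟩⟨1| ⊗ e_{N−1}e_{N−1}ᵀ)`. -/
def B11L (N : ℕ) [NeZero N] :
    Matrix (Fin 2 × Fin 2 × Fin 2 × Fin N) (Fin 2 × Fin 2 × Fin 2 × Fin N) ℂ :=
  Fctrl (P1 ⊗ₖ (P1 ⊗ₖ Matrix.single (fLast N) (fLast N) (1 : ℂ)))

/-- `B₄ = F(|0⟩⟨0| ⊗ |1⟩⟨1| ⊗ e_{N−1}e_{N−1}ᵀ)`. -/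
def B01L (N : ℕ) [NeZero N] :
    Matrix (Fin 2 × Fin 2 × Fin 2 × Fin N) (Fin 2 × Fin 2 × Fin 2 × Fin N) ℂ :=
  Fctrl (P0 ⊗ₖ (P1 ⊗ₖ Matrix.single (fLast N) (fLast N) (1 : ℂ)))

/-- `I₂ ⊗ A ⊗ A ⊗ I_N` for a single-qubit gate `A`. -/
def sandwich (N : ℕ) [NeZero N] (A : Matrix (Fin 2) (Fin 2) ℂ) :
    Matrix (Fin 2 × Fin 2 × Fin 2 × Fin N) (Fin 2 × Fin 2 × Fin 2 × Fin N) ℂ :=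
  (1 : Matrix (Fin 2) (Fin 2) ℂ) ⊗ₖ (A ⊗ₖ (A ⊗ₖ (1 : Matrix (Fin N) (Fin N) ℂ)))

/-- `U_d = (I₂⊗H⊗H⊗I) · C₊ · C₋ · B_{N−1} · B₀ · (I₂⊗Z⊗Z⊗I) · (I₂⊗H⊗H⊗I)`. -/
def Ud (N : ℕ) [NeZero N] :
    Matrix (Fin 2 × Fin 2 × Fin 2 × Fin N) (Fin 2 × Fin 2 × Fin 2 × Fin N) ℂ :=
  sandwich N Hgate * Cplus3 N * Cminus3 N * B11L N * B00 N * sandwich N Zgate * sandwich N Hgate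

/-- `U_n = (I₂⊗H⊗H⊗I) · C₊ · C₋ · B₄ · B₃ · B₂ · B₁ · (I₂⊗Z⊗Z⊗I) · (I₂⊗H⊗H⊗I)`. -/
def Un (N : ℕ) [NeZero N] :
    Matrix (Fin 2 × Fin 2 × Fin 2 × Fin N) (Fin 2 × Fin 2 × Fin 2 × Fin N) ℂ :=
  sandwich N Hgate * Cplus3 N * Cminus3 N * B01L N * B11L N * B01 N * B00 N *
    sandwich N Zgate * sandwich N Hgate

/-- The standard basis vector `e_i` of `ℂ^N`. -/
def eVec (N : ℕ) (i : Fin N) : Fin N → ℂ := Pi.single i 1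

-- ### helpers

def ket (N : ℕ) (d a b : Fin 2) (j : Fin N) : Fin 2 × Fin 2 × Fin 2 × Fin N → ℂ :=
  Pi.single (d, a, b, j) 1

abbrev hc : ℂ := ((1 / Real.sqrt 2 : ℝ) : ℂ)

variable {N : ℕ} [NeZero N]

lemma hH_col (d : Fin 2) (j : Fin N) :
    (sandwich N Hgate) *ᵥ ket N d 0 0 j =
      (hc * hc) • (ket N d 0 0 j + ket N d 0 1 j + ket N d 1 0 j + ket N d 1 1 j) := by
  rw [ket, Matrix.mulVec_single]
  funext ⟨d', a', b', j'⟩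
  fin_cases a' <;> fin_cases b' <;>
    simp [sandwich, Hgate, ket, Matrix.one_apply, Pi.single_apply, Prod.ext_iff, hc] <;>
    split_ifs <;> (try tauto) <;> ring

lemma hZ_col (d a b : Fin 2) (j : Fin N) :
    (sandwich N Zgate) *ᵥ ket N d a b j =
      (((if a = 0 then 1 else -1) * (if b = 0 then 1 else -1)) : ℂ) • ket N d a b j := by
  rw [ket, Matrix.mulVec_single]
  funext ⟨d', a', b', j'⟩
  fin_cases a <;> fin_cases b <;> fin_cases a' <;> fin_cases b' <;>
    simp [sandwich, Zgate, ket, Matrix.one_apply, Pi.single_apply, Prod.ext_iff] <;>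
    split_ifs <;> (try tauto) <;> ring

lemma Fctrl_fix (Q : Matrix (Fin 2 × Fin 2 × Fin N) (Fin 2 × Fin 2 × Fin N) ℂ)
    (d a b : Fin 2) (j : Fin N) (h : ∀ p, Q p (a, b, j) = 0) :
    (Fctrl Q) *ᵥ ket N d a b j = ket N d a b j := by
  rw [ket, Matrix.mulVec_single]
  funext ⟨d', p⟩
  simp [Fctrl, Matrix.one_apply, Pi.single_apply, h, Prod.ext_iff, Matrix.sub_apply]
  split_ifs <;> tauto

lemma Fctrl_flip (Q : Matrix (Fin 2 × Fin 2 × Fin N) (Fin 2 × Fin 2 × Fin N) ℂ)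
    (d a b : Fin 2) (j : Fin N)
    (h : ∀ p, Q p (a, b, j) = if p = (a, b, j) then 1 else 0) :
    (Fctrl Q) *ᵥ ket N d a b j = ket N (d + 1) a b j := by
  rw [ket, Matrix.mulVec_single]
  funext ⟨d', x, y, k⟩
  fin_cases d <;> fin_cases d' <;>
    simp [Fctrl, Xgate, ket, Matrix.one_apply, Pi.single_apply, h, Prod.ext_iff,
      Matrix.sub_apply] <;>
    split_ifs <;> (try tauto) <;> ring

lemma colJ (A B : Matrix (Fin 2) (Fin 2) ℂ) (t : Fin N) (a b : Fin 2) {j : Fin N}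
    (hj : j ≠ t) (p : Fin 2 × Fin 2 × Fin N) :
    (A ⊗ₖ (B ⊗ₖ Matrix.single t t (1 : ℂ))) p (a, b, j) = 0 := by
  obtain ⟨x, y, k⟩ := p
  simp [Matrix.single, Ne.symm hj]

lemma colA1 (B : Matrix (Fin 2) (Fin 2) ℂ) (t : Fin N) (b : Fin 2) (j : Fin N)
    (p : Fin 2 × Fin 2 × Fin N) :
    (P1 ⊗ₖ (B ⊗ₖ Matrix.single t t (1 : ℂ))) p ((0 : Fin 2), b, j) = 0 := by
  obtain ⟨x, y, k⟩ := p
  fin_cases x <;> simp [P1]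

lemma colA0 (B : Matrix (Fin 2) (Fin 2) ℂ) (t : Fin N) (b : Fin 2) (j : Fin N)
    (p : Fin 2 × Fin 2 × Fin N) :
    (P0 ⊗ₖ (B ⊗ₖ Matrix.single t t (1 : ℂ))) p ((1 : Fin 2), b, j) = 0 := by
  obtain ⟨x, y, k⟩ := p
  fin_cases x <;> simp [P0]

lemma colB1 (A : Matrix (Fin 2) (Fin 2) ℂ) (t : Fin N) (a : Fin 2) (j : Fin N)
    (p : Fin 2 × Fin 2 × Fin N) :
    (A ⊗ₖ (P1 ⊗ₖ Matrix.single t t (1 : ℂ))) p (a, (0 : Fin 2), j) = 0 := by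
  obtain ⟨x, y, k⟩ := p
  fin_cases y <;> simp [P1]

lemma colQ11 (t : Fin N) (p : Fin 2 × Fin 2 × Fin N) :
    (P1 ⊗ₖ (P1 ⊗ₖ Matrix.single t t (1 : ℂ))) p ((1 : Fin 2), (1 : Fin 2), t)
      = if p = (1, 1, t) then 1 else 0 := by
  obtain ⟨x, y, k⟩ := p
  fin_cases x <;> fin_cases y <;>
    simp [P1, Matrix.single, Prod.ext_iff, eq_comm]

lemma colQ01 (t : Fin N) (p : Fin 2 × Fin 2 × Fin N) :
    (P0 ⊗ₖ (P1 ⊗ₖ Matrix.single t t (1 : ℂ))) p ((0 : Fin 2), (1 : Fin 2), t)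
      = if p = (0, 1, t) then 1 else 0 := by
  obtain ⟨x, y, k⟩ := p
  fin_cases x <;> fin_cases y <;>
    simp [P0, P1, Matrix.single, Prod.ext_iff, eq_comm]

lemma hCm_col0 (d b : Fin 2) (j : Fin N) :
    (Cminus3 N) *ᵥ ket N d 0 b j = ket N d 0 b (j - 1) := by
  rw [ket, Matrix.mulVec_single]
  funext ⟨d', a', b', j'⟩
  fin_cases a' <;>
    simp [Cminus3, Sm, P0, P1, ket, Matrix.one_apply, Pi.single_apply, Prod.ext_iff] <;>
    split_ifs <;> tauto

lemma hCm_col1 (d b : Fin 2) (j : Fin N) :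
    (Cminus3 N) *ᵥ ket N d 1 b j = ket N d 1 b j := by
  rw [ket, Matrix.mulVec_single]
  funext ⟨d', a', b', j'⟩
  fin_cases a' <;>
    simp [Cminus3, Sm, P0, P1, ket, Matrix.one_apply, Pi.single_apply, Prod.ext_iff] <;>
    split_ifs <;> tauto

lemma hCp_col1 (d a : Fin 2) (j : Fin N) :
    (Cplus3 N) *ᵥ ket N d a 1 j = ket N d a 1 (j + 1) := by
  rw [ket, Matrix.mulVec_single]
  funext ⟨d', a', b', j'⟩
  fin_cases b' <;>
    simp [Cplus3, Sp, P0, P1, ket, Matrix.one_apply, Pi.single_apply, Prod.ext_iff] <;>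
    split_ifs <;> tauto

lemma hCp_col0 (d a : Fin 2) (j : Fin N) :
    (Cplus3 N) *ᵥ ket N d a 0 j = ket N d a 0 j := by
  rw [ket, Matrix.mulVec_single]
  funext ⟨d', a', b', j'⟩
  fin_cases b' <;>
    simp [Cplus3, Sp, P0, P1, ket, Matrix.one_apply, Pi.single_apply, Prod.ext_iff] <;>
    split_ifs <;> tauto

lemma key (hN : 2 ≤ N) (L1 : Fin N) (hL1 : L1.val = N - 2) (i : Fin N) :
    Un N ((0 : Fin 2), (0 : Fin 2), (0 : Fin 2), i)
        ((0 : Fin 2), (0 : Fin 2), (0 : Fin 2), fLast N)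
      = (1 / 4 : ℂ) *
          ((if i = L1 then 1 else 0) - (if i = fLast N then 1 else 0)) := by
  have hL0 : fLast N ≠ (0 : Fin N) := by
    simp only [fLast, Fin.ne_iff_vne, Fin.val_zero]
    omega
  have hone : (1 : Fin N).val = 1 := by
    rw [Fin.val_one']; exact Nat.mod_eq_of_lt (by omega)
  have hsub : fLast N - 1 = L1 := by
    apply Fin.ext
    rw [Fin.sub_def]
    simp only [fLast, hone, hL1]
    have h1 : N - 1 + (N - 1) = N - 2 + N := by omega
    rw [h1, Nat.add_mod_right, Nat.mod_eq_of_lt (by omega)]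
  have hadd : fLast N + 1 = (0 : Fin N) := by
    apply Fin.ext
    rw [Fin.add_def]
    simp only [fLast, hone, Fin.val_zero]
    have h1 : N - 1 + 1 = N := by omega
    rw [h1, Nat.mod_self]
  have h1add : L1 + 1 = fLast N := by
    apply Fin.ext
    rw [Fin.add_def]
    simp only [fLast, hone, hL1]
    have h1 : N - 2 + 1 = N - 1 := by omega
    rw [h1]
    exact Nat.mod_eq_of_lt (by omega)
  -- step 1: first Hadamard layer
  have e1 : sandwich N Hgate *ᵥ ket N 0 0 0 (fLast N) =
      (hc * hc) • (ket N 0 0 0 (fLast N) + ket N 0 0 1 (fLast N) + ket N 0 1 0 (fLast N)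
        + ket N 0 1 1 (fLast N)) :=
    hH_col 0 (fLast N)
  have e2 : sandwich N Zgate *ᵥ
      ((hc * hc) • (ket N 0 0 0 (fLast N) + ket N 0 0 1 (fLast N) + ket N 0 1 0 (fLast N)
        + ket N 0 1 1 (fLast N))) =
      (hc * hc) • (ket N 0 0 0 (fLast N) - ket N 0 0 1 (fLast N) - ket N 0 1 0 (fLast N)
        + ket N 0 1 1 (fLast N)) := by
    rw [Matrix.mulVec_smul, Matrix.mulVec_add, Matrix.mulVec_add, Matrix.mulVec_add,
      hZ_col, hZ_col, hZ_col, hZ_col]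
    norm_num
    module
  have e3 : B00 N *ᵥ
      ((hc * hc) • (ket N 0 0 0 (fLast N) - ket N 0 0 1 (fLast N) - ket N 0 1 0 (fLast N)
        + ket N 0 1 1 (fLast N))) =
      (hc * hc) • (ket N 0 0 0 (fLast N) - ket N 0 0 1 (fLast N) - ket N 0 1 0 (fLast N)
        + ket N 0 1 1 (fLast N)) := by
    rw [B00, Matrix.mulVec_smul, Matrix.mulVec_add, Matrix.mulVec_sub, Matrix.mulVec_sub,
      Fctrl_fix _ 0 0 0 (fLast N) (colJ P0 P0 0 0 0 hL0),
      Fctrl_fix _ 0 0 1 (fLast N) (colJ P0 P0 0 0 1 hL0),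
      Fctrl_fix _ 0 1 0 (fLast N) (colJ P0 P0 0 1 0 hL0),
      Fctrl_fix _ 0 1 1 (fLast N) (colJ P0 P0 0 1 1 hL0)]
  have e4 : B01 N *ᵥ
      ((hc * hc) • (ket N 0 0 0 (fLast N) - ket N 0 0 1 (fLast N) - ket N 0 1 0 (fLast N)
        + ket N 0 1 1 (fLast N))) =
      (hc * hc) • (ket N 0 0 0 (fLast N) - ket N 0 0 1 (fLast N) - ket N 0 1 0 (fLast N)
        + ket N 0 1 1 (fLast N)) := by
    rw [B01, Matrix.mulVec_smul, Matrix.mulVec_add, Matrix.mulVec_sub, Matrix.mulVec_sub,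
      Fctrl_fix _ 0 0 0 (fLast N) (colJ P0 P1 0 0 0 hL0),
      Fctrl_fix _ 0 0 1 (fLast N) (colJ P0 P1 0 0 1 hL0),
      Fctrl_fix _ 0 1 0 (fLast N) (colJ P0 P1 0 1 0 hL0),
      Fctrl_fix _ 0 1 1 (fLast N) (colJ P0 P1 0 1 1 hL0)]
  have e5 : B11L N *ᵥ
      ((hc * hc) • (ket N 0 0 0 (fLast N) - ket N 0 0 1 (fLast N) - ket N 0 1 0 (fLast N)
        + ket N 0 1 1 (fLast N))) =
      (hc * hc) • (ket N 0 0 0 (fLast N) - ket N 0 0 1 (fLast N) - ket N 0 1 0 (fLast N)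
        + ket N 1 1 1 (fLast N)) := by
    rw [B11L, Matrix.mulVec_smul, Matrix.mulVec_add, Matrix.mulVec_sub, Matrix.mulVec_sub,
      Fctrl_fix _ 0 0 0 (fLast N) (colA1 P1 (fLast N) 0 (fLast N)),
      Fctrl_fix _ 0 0 1 (fLast N) (colA1 P1 (fLast N) 1 (fLast N)),
      Fctrl_fix _ 0 1 0 (fLast N) (colB1 P1 (fLast N) 1 (fLast N)),
      Fctrl_flip _ 0 1 1 (fLast N) (colQ11 (fLast N)), zero_add]
  have e6 : B01L N *ᵥ
      ((hc * hc) • (ket N 0 0 0 (fLast N) - ket N 0 0 1 (fLast N) - ket N 0 1 0 (fLast N)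
        + ket N 1 1 1 (fLast N))) =
      (hc * hc) • (ket N 0 0 0 (fLast N) - ket N 1 0 1 (fLast N) - ket N 0 1 0 (fLast N)
        + ket N 1 1 1 (fLast N)) := by
    rw [B01L, Matrix.mulVec_smul, Matrix.mulVec_add, Matrix.mulVec_sub, Matrix.mulVec_sub,
      Fctrl_fix _ 0 0 0 (fLast N) (colB1 P0 (fLast N) 0 (fLast N)),
      Fctrl_flip _ 0 0 1 (fLast N) (colQ01 (fLast N)), zero_add,
      Fctrl_fix _ 0 1 0 (fLast N) (colA0 P1 (fLast N) 0 (fLast N)),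
      Fctrl_fix _ 1 1 1 (fLast N) (colA0 P1 (fLast N) 1 (fLast N))]
  have e7 : Cminus3 N *ᵥ
      ((hc * hc) • (ket N 0 0 0 (fLast N) - ket N 1 0 1 (fLast N) - ket N 0 1 0 (fLast N)
        + ket N 1 1 1 (fLast N))) =
      (hc * hc) • (ket N 0 0 0 L1 - ket N 1 0 1 L1 - ket N 0 1 0 (fLast N)
        + ket N 1 1 1 (fLast N)) := by
    rw [Matrix.mulVec_smul, Matrix.mulVec_add, Matrix.mulVec_sub, Matrix.mulVec_sub,
      hCm_col0 0 0 (fLast N), hCm_col0 1 1 (fLast N), hCm_col1 0 0 (fLast N),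
      hCm_col1 1 1 (fLast N), hsub]
  have e8 : Cplus3 N *ᵥ
      ((hc * hc) • (ket N 0 0 0 L1 - ket N 1 0 1 L1 - ket N 0 1 0 (fLast N)
        + ket N 1 1 1 (fLast N))) =
      (hc * hc) • (ket N 0 0 0 L1 - ket N 1 0 1 (fLast N) - ket N 0 1 0 (fLast N)
        + ket N 1 1 1 0) := by
    rw [Matrix.mulVec_smul, Matrix.mulVec_add, Matrix.mulVec_sub, Matrix.mulVec_sub,
      hCp_col0 0 0 L1, hCp_col1 1 0 L1, hCp_col0 0 1 (fLast N), hCp_col1 1 1 (fLast N),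
      h1add, hadd]
  have hval : Un N ((0 : Fin 2), (0 : Fin 2), (0 : Fin 2), i)
      ((0 : Fin 2), (0 : Fin 2), (0 : Fin 2), fLast N) =
      (Un N *ᵥ ket N 0 0 0 (fLast N)) ((0 : Fin 2), (0 : Fin 2), (0 : Fin 2), i) := by
    rw [ket]; simp only [Matrix.mulVec_single_one, Matrix.col_apply]
  rw [hval, Un]
  simp only [← Matrix.mulVec_mulVec]
  rw [e1, e2, e3, e4, e5, e6, e7, e8,
    Matrix.mulVec_smul, Matrix.mulVec_add, Matrix.mulVec_sub, Matrix.mulVec_sub]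
  have hv1 : (sandwich N Hgate *ᵥ ket N 0 0 0 L1) ((0 : Fin 2), (0 : Fin 2), (0 : Fin 2), i)
      = (hc * hc) * (if i = L1 then 1 else 0) := by
    rw [ket]; simp only [Matrix.mulVec_single_one, Matrix.col_apply]
    simp only [sandwich, Matrix.kroneckerMap_apply, Matrix.one_apply, Hgate,
      Matrix.smul_apply, Matrix.cons_val', Matrix.cons_val_zero, Matrix.cons_val_one,
      Matrix.head_cons, Matrix.empty_val', Matrix.cons_val_fin_one, Matrix.head_fin_const,
      smul_eq_mul]
    split_ifs <;> simp [hc] <;> ring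
  have hv2 : (sandwich N Hgate *ᵥ ket N 1 0 1 (fLast N))
      ((0 : Fin 2), (0 : Fin 2), (0 : Fin 2), i) = 0 := by
    rw [ket]; simp only [Matrix.mulVec_single, mul_one]
    simp [sandwich, Matrix.one_apply]
  have hv3 : (sandwich N Hgate *ᵥ ket N 0 1 0 (fLast N))
      ((0 : Fin 2), (0 : Fin 2), (0 : Fin 2), i)
      = (hc * hc) * (if i = fLast N then 1 else 0) := by
    rw [ket]; simp only [Matrix.mulVec_single_one, Matrix.col_apply]
    simp only [sandwich, Matrix.kroneckerMap_apply, Matrix.one_apply, Hgate,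
      Matrix.smul_apply, Matrix.cons_val', Matrix.cons_val_zero, Matrix.cons_val_one,
      Matrix.head_cons, Matrix.empty_val', Matrix.cons_val_fin_one, Matrix.head_fin_const,
      smul_eq_mul]
    split_ifs <;> simp [hc] <;> ring
  have hv4 : (sandwich N Hgate *ᵥ ket N 1 1 1 0)
      ((0 : Fin 2), (0 : Fin 2), (0 : Fin 2), i) = 0 := by
    rw [ket]; simp only [Matrix.mulVec_single, mul_one]
    simp [sandwich, Matrix.one_apply]
  have hcc : hc * hc = (1 / 2 : ℂ) := by
    rw [← Complex.ofReal_mul, div_mul_div_comm, one_mul,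
      Real.mul_self_sqrt (by norm_num : (0:ℝ) ≤ 2)]
    norm_num
  simp only [Pi.smul_apply, Pi.add_apply, Pi.sub_apply, hv1, hv2, hv3, hv4, smul_eq_mul, hcc]
  ring

/-- `(⟨0|⊗⟨0|⊗⟨0|⊗I) U_n (|0⟩⊗|0⟩⊗|0⟩⊗e_{N−1}) = (1/4)(e_{N−2} − e_{N−1})`. -/
theorem un_right_boundary_action (n : ℕ) (hn : 1 ≤ n) :
    (fun i : Fin (2 ^ n) =>
        Un (2 ^ n) ((0 : Fin 2), (0 : Fin 2), (0 : Fin 2), i)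
          ((0 : Fin 2), (0 : Fin 2), (0 : Fin 2), fLast (2 ^ n)))
      = (1 / 4 : ℂ) •
          (eVec (2 ^ n)
              ⟨2 ^ n - 2, (by have := Nat.one_lt_two_pow_iff.mpr (by omega : n ≠ 0); omega)⟩
            - eVec (2 ^ n) (fLast (2 ^ n))) := by
  have h2 : 2 ≤ 2 ^ n := by
    have := Nat.one_lt_two_pow_iff.mpr (by omega : n ≠ 0); omega
  funext i
  rw [key h2 ⟨2 ^ n - 2,
      (by have := Nat.one_lt_two_pow_iff.mpr (by omega : n ≠ 0); omega)⟩ rfl i]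
  simp [eVec, Pi.single_apply]
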